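/- Let Ω ⊆ ℝ³ be an open connected set and let A : Ω → ℝ^{3×3} be a continuously differentiable field of skew-symmetric matrices. Then sym(Curl A) = 0 everywhere on Ω if and only if there exist a constant skew-symmetric matrix Ã ∈ so(3) and a constant vector b ∈ ℝ³ such that A(x) = Anti(Ã·x + b) for all x ∈ Ω. -/

import Mathlib

open Matrix MeasureTheory

noncomputable section

abbrev M3 := Matrix (Fin 3) (Fin 3) ℝ
abbrev V3 := Fin 3 → ℝ

def sym3 (X : M3) : M3 := (1/2 : ℝ) • (X + Xᵀ)
def dev3 (X : M3) : M3 := X - ((1/3 : ℝ) * Matrix.trace X) • (1 : M3)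
def Anti3 (a : V3) : M3 := !![0, -a 2, a 1; a 2, 0, -a 0; -a 1, a 0, 0]
def frobSq (X : M3) : ℝ := ∑ i, ∑ j, (X i j)^2
def frobNorm (X : M3) : ℝ := Real.sqrt (frobSq X)
def vnormSq (a : V3) : ℝ := ∑ i, (a i)^2

def pd (k : Fin 3) (f : V3 → ℝ) (x : V3) : ℝ := fderiv ℝ f x (Pi.single k 1)

def Curl3 (P : V3 → M3) (x : V3) : M3 :=
  Matrix.of fun i j =>
    ![pd 1 (fun y => P y i 2) x - pd 2 (fun y => P y i 1) x,
      pd 2 (fun y => P y i 0) x - pd 0 (fun y => P y i 2) x,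
      pd 0 (fun y => P y i 1) x - pd 1 (fun y => P y i 0) x] j

def Jac3 (u : V3 → V3) (x : V3) : M3 :=
  Matrix.of fun i j => pd j (fun y => u y i) x

def lpM (q : ℝ) (Q : V3 → M3) : ℝ := (∫ x : V3, frobNorm (Q x) ^ q) ^ (1/q)
def lpV (q : ℝ) (a : V3 → V3) : ℝ := (∫ x : V3, Real.sqrt (vnormSq (a x)) ^ q) ^ (1/q)

attribute [local instance] Matrix.frobeniusNormedAddCommGroup Matrix.frobeniusNormedSpace

/-! ### Auxiliary material for `stmt5` -/

/-- The matrix-entry evaluation, as a continuous linear map (w.r.t. Frobenius norm). -/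
def entryCLM (i j : Fin 3) : M3 →L[ℝ] ℝ :=
  LinearMap.toContinuousLinearMap
    ((LinearMap.proj j).comp (LinearMap.proj i : M3 →ₗ[ℝ] (Fin 3 → ℝ)))

lemma pd_congr' {f g : V3 → ℝ} {x : V3} (h : f =ᶠ[nhds x] g) (k : Fin 3) :
    pd k f x = pd k g x := by
  unfold pd; rw [h.fderiv_eq]

lemma pd_comp' (f : V3 → V3) (x : V3) (hf : DifferentiableAt ℝ f x) (i k : Fin 3) :
    pd k (fun y => f y i) x = fderiv ℝ f x (Pi.single k 1) i := by
  have h := ((ContinuousLinearMap.proj (R := ℝ) (φ := fun _ : Fin 3 => ℝ) i).hasFDerivAt.comp x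
    hf.hasFDerivAt).fderiv
  unfold pd
  show (fderiv ℝ ((ContinuousLinearMap.proj (R := ℝ) (φ := fun _ : Fin 3 => ℝ) i) ∘ f) x)
    (Pi.single k 1) = _
  rw [h]; rfl

lemma pd_neg' (f : V3 → ℝ) (x : V3) (k : Fin 3) :
    pd k (fun y => -(f y)) x = -pd k f x := by
  unfold pd; rw [fderiv_fun_neg]; rfl

lemma pd_const' (c : ℝ) (x : V3) (k : Fin 3) : pd k (fun _ => c) x = 0 := by
  unfold pd; rw [fderiv_const_apply]; rfl

lemma apply_eq_sum' (L : V3 →L[ℝ] V3) (h : V3) (i : Fin 3) :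
    L h i = ∑ j, h j * L (Pi.single j 1) i := by
  have hh : h = ∑ j, h j • (Pi.single j 1 : V3) := by
    funext m
    simp [Pi.single_apply, Finset.sum_ite_eq']
  conv_lhs => rw [hh]
  rw [map_sum]
  simp [Finset.sum_apply, smul_comm]

lemma pairing_of_basis' (L : V3 →L[ℝ] V3)
    (hb : ∀ i j, L (Pi.single j 1) i + L (Pi.single i 1) j = 0) :
    ∀ h k : V3, (∑ i, L h i * k i) + (∑ i, L k i * h i) = 0 := by
  intro h k
  have e1 : ∀ i, L h i = ∑ j, h j * L (Pi.single j 1) i := fun i => apply_eq_sum' L h i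
  have e2 : ∀ i, L k i = ∑ j, k j * L (Pi.single j 1) i := fun i => apply_eq_sum' L k i
  simp only [Fin.sum_univ_three] at e1 e2 ⊢
  rw [e1 0, e1 1, e1 2, e2 0, e2 1, e2 2]
  linear_combination (h 0 * k 0) * hb 0 0 + (h 1 * k 0) * hb 0 1 + (h 2 * k 0) * hb 0 2
    + (h 0 * k 1) * hb 1 0 + (h 1 * k 1) * hb 1 1 + (h 2 * k 1) * hb 1 2
    + (h 0 * k 2) * hb 2 0 + (h 1 * k 2) * hb 2 1 + (h 2 * k 2) * hb 2 2

lemma pd_affine' (Atil : M3) (b : V3) (m k : Fin 3) (x : V3) :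
    pd k (fun y => (Atil.mulVec y + b) m) x = Atil m k := by
  have hrep : (fun y : V3 => (Atil.mulVec y + b) m)
      = fun y => (∑ j, Atil m j * y j) + b m := by
    funext y
    simp [Matrix.mulVec, dotProduct]
  have hF : HasFDerivAt (fun y : V3 => (∑ j, Atil m j * y j) + b m)
      (∑ j, Atil m j • (ContinuousLinearMap.proj j : V3 →L[ℝ] ℝ)) x := by
    apply HasFDerivAt.add_const
    apply HasFDerivAt.fun_sum
    intro j _
    exact (ContinuousLinearMap.proj (R := ℝ) (φ := fun _ : Fin 3 => ℝ)
      j).hasFDerivAt.const_mul (Atil m j)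
  unfold pd
  rw [hrep, hF.fderiv]
  simp [ContinuousLinearMap.sum_apply, Pi.single_apply, mul_ite, Finset.sum_ite_eq']

lemma locally_const_eq' {β : Type*} (Ω : Set V3) (hΩc : IsPreconnected Ω) (f : V3 → β)
    (hloc : ∀ x ∈ Ω, ∃ ε > 0, Metric.ball x ε ⊆ Ω ∧ ∀ y ∈ Metric.ball x ε, f y = f x)
    {x₀ : V3} (hx₀ : x₀ ∈ Ω) : ∀ x ∈ Ω, f x = f x₀ := by
  intro x hx
  by_contra hne
  set u := {z | z ∈ Ω ∧ f z = f x₀} with hu'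
  set v := {z | z ∈ Ω ∧ f z ≠ f x₀} with hv'
  have hu : IsOpen u := by
    rw [Metric.isOpen_iff]
    intro z hz
    obtain ⟨ε, hε, hb, hc⟩ := hloc z hz.1
    exact ⟨ε, hε, fun y hy => ⟨hb hy, (hc y hy).trans hz.2⟩⟩
  have hv : IsOpen v := by
    rw [Metric.isOpen_iff]
    intro z hz
    obtain ⟨ε, hε, hb, hc⟩ := hloc z hz.1
    exact ⟨ε, hε, fun y hy => ⟨hb hy, by rw [hc y hy]; exact hz.2⟩⟩
  obtain ⟨z, _, hzu, hzv⟩ := hΩc u v hu hv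
    (fun z hz => by
      by_cases h : f z = f x₀
      · exact Or.inl ⟨hz, h⟩
      · exact Or.inr ⟨hz, h⟩)
    ⟨x₀, hx₀, hx₀, rfl⟩ ⟨x, hx, hx, hne⟩
  exact hzv.2 hzu.2

lemma ball_dot_zero' (a : V3 → V3) (c : V3) (r : ℝ)
    (hdiff : ∀ z ∈ Metric.ball c r, DifferentiableAt ℝ a z)
    (hskew : ∀ z ∈ Metric.ball c r, ∀ h k : V3,
      (∑ i, fderiv ℝ a z h i * k i) + (∑ i, fderiv ℝ a z k i * h i) = 0) :
    ∀ x ∈ Metric.ball c r, ∀ y ∈ Metric.ball c r,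
      ∑ i, (a x i - a y i) * (x i - y i) = 0 := by
  intro x hx y hy
  have hz : ∀ t ∈ Set.Icc (0:ℝ) 1, y + t • (x - y) ∈ Metric.ball c r := by
    intro t ht
    have h2 := (convex_ball c r) hy hx (by linarith [ht.2] : (0:ℝ) ≤ 1 - t) ht.1 (by ring)
    convert h2 using 1
    module
  have hg : ∀ t ∈ Set.Icc (0:ℝ) 1, HasDerivAt
      (fun s : ℝ => ∑ i, (a (y + s • (x - y)) i - a y i) * (x i - y i)) 0 t := by
    intro t ht
    have hz' := hz t ht
    have hline : HasDerivAt (fun s : ℝ => y + s • (x - y)) (x - y) t := by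
      simpa using ((hasDerivAt_id t).smul_const (x - y)).const_add y
    have hcomp : HasDerivAt (fun s : ℝ => a (y + s • (x - y)))
        (fderiv ℝ a (y + t • (x - y)) (x - y)) t :=
      (hdiff _ hz').hasFDerivAt.comp_hasDerivAt t hline
    have hci : ∀ i : Fin 3, HasDerivAt (fun s : ℝ => a (y + s • (x - y)) i)
        (fderiv ℝ a (y + t • (x - y)) (x - y) i) t := fun i =>
      (ContinuousLinearMap.proj (R := ℝ) (φ := fun _ : Fin 3 => ℝ)
        i).hasFDerivAt.comp_hasDerivAt t hcomp
    have hsum : HasDerivAt (fun s => ∑ i, (a (y + s • (x - y)) i - a y i) * (x i - y i))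
        (∑ i, fderiv ℝ a (y + t • (x - y)) (x - y) i * (x i - y i)) t :=
      HasDerivAt.fun_sum fun i _ => ((hci i).sub_const (a y i)).mul_const _
    have h0 : ∑ i, fderiv ℝ a (y + t • (x - y)) (x - y) i * (x i - y i) = 0 := by
      have h := hskew _ hz' (x - y) (x - y)
      simp only [Pi.sub_apply] at h ⊢
      linarith
    rw [h0] at hsum; exact hsum
  have hconst := constant_of_has_deriv_right_zero
    (f := fun s : ℝ => ∑ i, (a (y + s • (x - y)) i - a y i) * (x i - y i))
    (fun t ht => (hg t ht).continuousAt.continuousWithinAt)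
    (fun t ht => (hg t (Set.mem_Icc.2 ⟨ht.1, le_of_lt ht.2⟩)).hasDerivWithinAt)
  have h1 := hconst 1 (by norm_num)
  simp only [one_smul, zero_smul, add_zero, sub_self, zero_mul,
    Finset.sum_const_zero] at h1
  rw [show y + (x - y) = x from by module] at h1
  exact h1

lemma ball_affine' (a : V3 → V3) (c : V3) (r : ℝ)
    (hdiff : ∀ z ∈ Metric.ball c r, DifferentiableAt ℝ a z)
    (hskew : ∀ z ∈ Metric.ball c r, ∀ h k : V3,
      (∑ i, fderiv ℝ a z h i * k i) + (∑ i, fderiv ℝ a z k i * h i) = 0) :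
    ∀ x ∈ Metric.ball c r, ∀ y ∈ Metric.ball c r, ∀ i,
      a x i - a y i = fderiv ℝ a x (x - y) i := by
  intro x hx y hy
  have hψ0 : (fun z => ∑ i, (a z i - a y i) * (z i - y i)) =ᶠ[nhds x]
      fun _ => (0:ℝ) := by
    filter_upwards [Metric.isOpen_ball.mem_nhds hx] with z hz
    exact ball_dot_zero' a c r hdiff hskew z hz y hy
  have hfd0 : fderiv ℝ (fun z => ∑ i, (a z i - a y i) * (z i - y i)) x = 0 := by
    rw [hψ0.fderiv_eq]; exact fderiv_const_apply 0
  have hFd : HasFDerivAt (fun z => ∑ i, (a z i - a y i) * (z i - y i))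
      (∑ i, ((a x i - a y i) • (ContinuousLinearMap.proj i : V3 →L[ℝ] ℝ)
        + (x i - y i) • ((ContinuousLinearMap.proj i : V3 →L[ℝ] ℝ).comp (fderiv ℝ a x)))) x := by
    apply HasFDerivAt.fun_sum
    intro i _
    have hFi : HasFDerivAt (fun z => a z i - a y i)
        ((ContinuousLinearMap.proj i : V3 →L[ℝ] ℝ).comp (fderiv ℝ a x)) x :=
      ((ContinuousLinearMap.proj (R := ℝ) (φ := fun _ : Fin 3 => ℝ)
        i).hasFDerivAt.comp x (hdiff x hx).hasFDerivAt).sub_const (a y i)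
    have hGi : HasFDerivAt (fun z : V3 => z i - y i)
        (ContinuousLinearMap.proj i : V3 →L[ℝ] ℝ) x :=
      (ContinuousLinearMap.proj (R := ℝ) (φ := fun _ : Fin 3 => ℝ)
        i).hasFDerivAt.sub_const (y i)
    exact hFi.mul hGi
  have hL : (∑ i, ((a x i - a y i) • (ContinuousLinearMap.proj i : V3 →L[ℝ] ℝ)
        + (x i - y i) • ((ContinuousLinearMap.proj i : V3 →L[ℝ] ℝ).comp (fderiv ℝ a x))))
      = (0 : V3 →L[ℝ] ℝ) := by
    rw [← hFd.fderiv, hfd0]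
  have hev : ∀ h : V3, (∑ i, ((a x i - a y i) * h i
      + (x i - y i) * (fderiv ℝ a x h i))) = 0 := by
    intro h
    have := congrArg (fun L : V3 →L[ℝ] ℝ => L h) hL
    simpa [ContinuousLinearMap.sum_apply, ContinuousLinearMap.add_apply,
      ContinuousLinearMap.smul_apply, ContinuousLinearMap.comp_apply, smul_eq_mul] using this
  intro i
  set cv : V3 := fun j => a x j - a y j - fderiv ℝ a x (x - y) j with hcv
  have hc : ∑ j, cv j * cv j = 0 := by
    have h1 := hev cv
    have h2 := hskew x hx cv (x - y)
    simp only [Fin.sum_univ_three, Pi.sub_apply, hcv] at h1 h2 ⊢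
    linear_combination h1 - h2
  have hz := (Finset.sum_eq_zero_iff_of_nonneg
    (fun j _ => mul_self_nonneg (cv j))).1 hc i (Finset.mem_univ i)
  have hcz : cv i = 0 := mul_self_eq_zero.mp hz
  simpa [hcv, sub_eq_zero] using hcz

lemma ball_W_const' (a : V3 → V3) (c : V3) (r : ℝ)
    (hdiff : ∀ z ∈ Metric.ball c r, DifferentiableAt ℝ a z)
    (hskew : ∀ z ∈ Metric.ball c r, ∀ h k : V3,
      (∑ i, fderiv ℝ a z h i * k i) + (∑ i, fderiv ℝ a z k i * h i) = 0) :
    ∀ y ∈ Metric.ball c r, fderiv ℝ a y = fderiv ℝ a c := by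
  intro y hy
  have hc : c ∈ Metric.ball c r :=
    Metric.mem_ball_self (lt_of_le_of_lt dist_nonneg (Metric.mem_ball.1 hy))
  have key : ∀ i : Fin 3,
      ((ContinuousLinearMap.proj i : V3 →L[ℝ] ℝ).comp (fderiv ℝ a y))
        = (ContinuousLinearMap.proj i : V3 →L[ℝ] ℝ).comp (fderiv ℝ a c) := by
    intro i
    have heq : (fun z => a z i) =ᶠ[nhds y] fun z =>
        (a c i - fderiv ℝ a c c i)
          + ((ContinuousLinearMap.proj i : V3 →L[ℝ] ℝ).comp (fderiv ℝ a c)) z := by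
      filter_upwards [Metric.isOpen_ball.mem_nhds hy] with z hz
      have h := ball_affine' a c r hdiff hskew c hc z hz i
      have hms : fderiv ℝ a c (c - z) i = fderiv ℝ a c c i - fderiv ℝ a c z i := by
        rw [map_sub]; rfl
      simp only [ContinuousLinearMap.comp_apply, ContinuousLinearMap.proj_apply]
      linarith [h, hms]
    have h1 := heq.fderiv_eq (𝕜 := ℝ)
    have hLft : fderiv ℝ (fun z => a z i) y
        = (ContinuousLinearMap.proj i : V3 →L[ℝ] ℝ).comp (fderiv ℝ a y) :=
      ((ContinuousLinearMap.proj (R := ℝ) (φ := fun _ : Fin 3 => ℝ)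
        i).hasFDerivAt.comp y (hdiff y hy).hasFDerivAt).fderiv
    have hRgt : fderiv ℝ (fun z =>
        (a c i - fderiv ℝ a c c i)
          + ((ContinuousLinearMap.proj i : V3 →L[ℝ] ℝ).comp (fderiv ℝ a c)) z) y
        = (ContinuousLinearMap.proj i : V3 →L[ℝ] ℝ).comp (fderiv ℝ a c) :=
      (((ContinuousLinearMap.proj i : V3 →L[ℝ] ℝ).comp
        (fderiv ℝ a c)).hasFDerivAt.const_add _).fderiv
    rw [hLft, hRgt] at h1
    exact h1
  refine ContinuousLinearMap.ext fun v => funext fun i => ?_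
  have := congrArg (fun L : V3 →L[ℝ] ℝ => L v) (key i)
  simpa using this

lemma skew_pairing_of_sym' (A : V3 → M3) (a : V3 → V3) (x : V3)
    (ha : DifferentiableAt ℝ a x)
    (hev : ∀ᶠ y in nhds x, A y = Anti3 (a y))
    (hsym : sym3 (Curl3 A x) = 0) :
    ∀ i j, fderiv ℝ a x (Pi.single j 1) i + fderiv ℝ a x (Pi.single i 1) j = 0 := by
  have hp : ∀ i k, pd k (fun y => a y i) x = fderiv ℝ a x (Pi.single k 1) i :=
    fun i k => pd_comp' a x ha i k
  have h00 : ∀ k, pd k (fun y => A y 0 0) x = 0 := fun k =>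
    (pd_congr' (show (fun y => A y 0 0) =ᶠ[nhds x] fun _ => (0:ℝ) from
      hev.mono fun y hy => by simp only [hy]; rfl) k).trans (pd_const' 0 x k)
  have h11 : ∀ k, pd k (fun y => A y 1 1) x = 0 := fun k =>
    (pd_congr' (show (fun y => A y 1 1) =ᶠ[nhds x] fun _ => (0:ℝ) from
      hev.mono fun y hy => by simp only [hy]; rfl) k).trans (pd_const' 0 x k)
  have h22 : ∀ k, pd k (fun y => A y 2 2) x = 0 := fun k =>
    (pd_congr' (show (fun y => A y 2 2) =ᶠ[nhds x] fun _ => (0:ℝ) from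
      hev.mono fun y hy => by simp only [hy]; rfl) k).trans (pd_const' 0 x k)
  have h01 : ∀ k, pd k (fun y => A y 0 1) x = -(fderiv ℝ a x (Pi.single k 1) 2) := fun k => by
    rw [pd_congr' (show (fun y => A y 0 1) =ᶠ[nhds x] fun y => -(a y 2) from
      hev.mono fun y hy => by simp only [hy]; rfl) k, pd_neg', hp]
  have h02 : ∀ k, pd k (fun y => A y 0 2) x = fderiv ℝ a x (Pi.single k 1) 1 := fun k => by
    rw [pd_congr' (show (fun y => A y 0 2) =ᶠ[nhds x] fun y => a y 1 from
      hev.mono fun y hy => by simp only [hy]; rfl) k, hp]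
  have h10 : ∀ k, pd k (fun y => A y 1 0) x = fderiv ℝ a x (Pi.single k 1) 2 := fun k => by
    rw [pd_congr' (show (fun y => A y 1 0) =ᶠ[nhds x] fun y => a y 2 from
      hev.mono fun y hy => by simp only [hy]; rfl) k, hp]
  have h12 : ∀ k, pd k (fun y => A y 1 2) x = -(fderiv ℝ a x (Pi.single k 1) 0) := fun k => by
    rw [pd_congr' (show (fun y => A y 1 2) =ᶠ[nhds x] fun y => -(a y 0) from
      hev.mono fun y hy => by simp only [hy]; rfl) k, pd_neg', hp]
  have h20 : ∀ k, pd k (fun y => A y 2 0) x = -(fderiv ℝ a x (Pi.single k 1) 1) := fun k => by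
    rw [pd_congr' (show (fun y => A y 2 0) =ᶠ[nhds x] fun y => -(a y 1) from
      hev.mono fun y hy => by simp only [hy]; rfl) k, pd_neg', hp]
  have h21 : ∀ k, pd k (fun y => A y 2 1) x = fderiv ℝ a x (Pi.single k 1) 0 := fun k => by
    rw [pd_congr' (show (fun y => A y 2 1) =ᶠ[nhds x] fun y => a y 0 from
      hev.mono fun y hy => by simp only [hy]; rfl) k, hp]
  have hC : ∀ i j : Fin 3, Curl3 A x i j + Curl3 A x j i = 0 := by
    intro i j
    have h1 := congrFun (congrFun hsym i) j
    have h2 := congrFun (congrFun hsym j) i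
    simp only [sym3, Matrix.smul_apply, Matrix.add_apply, Matrix.transpose_apply,
      Matrix.zero_apply, smul_eq_mul] at h1
    linarith
  have e00 := hC 0 0; have e11 := hC 1 1; have e22 := hC 2 2
  have e01 := hC 0 1; have e02 := hC 0 2; have e12 := hC 1 2
  rw [show Curl3 A x 0 0 = pd 1 (fun y => A y 0 2) x - pd 2 (fun y => A y 0 1) x from rfl] at e00
  rw [show Curl3 A x 1 1 = pd 2 (fun y => A y 1 0) x - pd 0 (fun y => A y 1 2) x from rfl] at e11
  rw [show Curl3 A x 2 2 = pd 0 (fun y => A y 2 1) x - pd 1 (fun y => A y 2 0) x from rfl] at e22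
  rw [show Curl3 A x 0 1 = pd 2 (fun y => A y 0 0) x - pd 0 (fun y => A y 0 2) x from rfl,
      show Curl3 A x 1 0 = pd 1 (fun y => A y 1 2) x - pd 2 (fun y => A y 1 1) x from rfl] at e01
  rw [show Curl3 A x 0 2 = pd 0 (fun y => A y 0 1) x - pd 1 (fun y => A y 0 0) x from rfl,
      show Curl3 A x 2 0 = pd 1 (fun y => A y 2 2) x - pd 2 (fun y => A y 2 1) x from rfl] at e02
  rw [show Curl3 A x 1 2 = pd 0 (fun y => A y 1 1) x - pd 1 (fun y => A y 1 0) x from rfl,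
      show Curl3 A x 2 1 = pd 2 (fun y => A y 2 0) x - pd 0 (fun y => A y 2 2) x from rfl] at e12
  simp only [h00, h01, h02, h10, h11, h12, h20, h21, h22] at e00 e11 e22 e01 e02 e12
  intro i j
  have hfin : ∀ m : Fin 3, m = 0 ∨ m = 1 ∨ m = 2 := by decide
  rcases hfin i with hi|hi|hi <;> rcases hfin j with hj|hj|hj <;> subst hi <;> subst hj <;>
    linarith [e00, e11, e22, e01, e02, e12]

lemma sym_curl_of_affine' (A : V3 → M3) (Atil : M3) (b : V3) (x : V3)
    (hsk : Atilᵀ = -Atil)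
    (hev : ∀ᶠ y in nhds x, A y = Anti3 (Atil.mulVec y + b)) :
    sym3 (Curl3 A x) = 0 := by
  have hskE : ∀ i j, Atil j i = -Atil i j := fun i j => by
    have := congrFun (congrFun hsk i) j
    simpa [Matrix.transpose_apply, Matrix.neg_apply] using this
  have h00 : ∀ k, pd k (fun y => A y 0 0) x = 0 := fun k =>
    (pd_congr' (show (fun y => A y 0 0) =ᶠ[nhds x] fun _ => (0:ℝ) from
      hev.mono fun y hy => by simp only [hy]; rfl) k).trans (pd_const' 0 x k)
  have h11 : ∀ k, pd k (fun y => A y 1 1) x = 0 := fun k =>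
    (pd_congr' (show (fun y => A y 1 1) =ᶠ[nhds x] fun _ => (0:ℝ) from
      hev.mono fun y hy => by simp only [hy]; rfl) k).trans (pd_const' 0 x k)
  have h22 : ∀ k, pd k (fun y => A y 2 2) x = 0 := fun k =>
    (pd_congr' (show (fun y => A y 2 2) =ᶠ[nhds x] fun _ => (0:ℝ) from
      hev.mono fun y hy => by simp only [hy]; rfl) k).trans (pd_const' 0 x k)
  have h01 : ∀ k, pd k (fun y => A y 0 1) x = -Atil 2 k := fun k => by
    rw [pd_congr' (show (fun y => A y 0 1) =ᶠ[nhds x]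
        fun y => -((Atil.mulVec y + b) 2) from
      hev.mono fun y hy => by simp only [hy]; rfl) k, pd_neg', pd_affine']
  have h02 : ∀ k, pd k (fun y => A y 0 2) x = Atil 1 k := fun k => by
    rw [pd_congr' (show (fun y => A y 0 2) =ᶠ[nhds x]
        fun y => (Atil.mulVec y + b) 1 from
      hev.mono fun y hy => by simp only [hy]; rfl) k, pd_affine']
  have h10 : ∀ k, pd k (fun y => A y 1 0) x = Atil 2 k := fun k => by
    rw [pd_congr' (show (fun y => A y 1 0) =ᶠ[nhds x]
        fun y => (Atil.mulVec y + b) 2 from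
      hev.mono fun y hy => by simp only [hy]; rfl) k, pd_affine']
  have h12 : ∀ k, pd k (fun y => A y 1 2) x = -Atil 0 k := fun k => by
    rw [pd_congr' (show (fun y => A y 1 2) =ᶠ[nhds x]
        fun y => -((Atil.mulVec y + b) 0) from
      hev.mono fun y hy => by simp only [hy]; rfl) k, pd_neg', pd_affine']
  have h20 : ∀ k, pd k (fun y => A y 2 0) x = -Atil 1 k := fun k => by
    rw [pd_congr' (show (fun y => A y 2 0) =ᶠ[nhds x]
        fun y => -((Atil.mulVec y + b) 1) from
      hev.mono fun y hy => by simp only [hy]; rfl) k, pd_neg', pd_affine']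
  have h21 : ∀ k, pd k (fun y => A y 2 1) x = Atil 0 k := fun k => by
    rw [pd_congr' (show (fun y => A y 2 1) =ᶠ[nhds x]
        fun y => (Atil.mulVec y + b) 0 from
      hev.mono fun y hy => by simp only [hy]; rfl) k, pd_affine']
  have hC : ∀ i j, Curl3 A x i j + Curl3 A x j i = 0 := by
    have hfin : ∀ m : Fin 3, m = 0 ∨ m = 1 ∨ m = 2 := by decide
    intro i j
    rcases hfin i with hi|hi|hi <;> rcases hfin j with hj|hj|hj <;> subst hi <;> subst hj <;>
      simp only [show ∀ i' j' : Fin 3, Curl3 A x i' j' =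
        ![pd 1 (fun y => A y i' 2) x - pd 2 (fun y => A y i' 1) x,
          pd 2 (fun y => A y i' 0) x - pd 0 (fun y => A y i' 2) x,
          pd 0 (fun y => A y i' 1) x - pd 1 (fun y => A y i' 0) x] j' from fun _ _ => rfl,
        Matrix.cons_val_zero, Matrix.cons_val_one, Matrix.head_cons,
        Matrix.cons_val_two, Matrix.tail_cons,
        h00, h01, h02, h10, h11, h12, h20, h21, h22] <;>
      linarith [hskE 0 0, hskE 1 1, hskE 2 2, hskE 0 1, hskE 0 2, hskE 1 2,
        hskE 1 0, hskE 2 0, hskE 2 1]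
  refine Matrix.ext fun i j => ?_
  simp only [sym3, Matrix.smul_apply, Matrix.add_apply, Matrix.transpose_apply,
    Matrix.zero_apply, smul_eq_mul]
  linarith [hC i j]

/-- for Ω ⊆ ℝ³ open connected and A : Ω → so(3) of class C¹,
sym(Curl A) ≡ 0 on Ω iff A(x) = Anti(Ã·x + b) on Ω for some constant
Ã ∈ so(3) and b ∈ ℝ³. -/
theorem stmt5 (Ω : Set V3) (hΩo : IsOpen Ω) (hΩc : IsConnected Ω)
    (A : V3 → M3) (hA : ContDiffOn ℝ 1 A Ω) (hskew : ∀ x ∈ Ω, (A x)ᵀ = -(A x)) :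
    (∀ x ∈ Ω, sym3 (Curl3 A x) = 0) ↔
      ∃ (Atil : M3) (b : V3), Atilᵀ = -Atil ∧
        ∀ x ∈ Ω, A x = Anti3 (Atil.mulVec x + b) := by
  have hfin : ∀ m : Fin 3, m = 0 ∨ m = 1 ∨ m = 2 := by decide
  set a : V3 → V3 := fun x => ![A x 2 1, A x 0 2, A x 1 0] with ha_def
  have hAa : ∀ x ∈ Ω, A x = Anti3 (a x) := by
    intro x hx
    have hsk : ∀ i j, A x j i = -(A x i j) := fun i j => by
      have := congrFun (congrFun (hskew x hx) i) j
      simpa [Matrix.transpose_apply, Matrix.neg_apply] using this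
    refine Matrix.ext fun i j => ?_
    rcases hfin i with hi|hi|hi <;> rcases hfin j with hj|hj|hj <;> subst hi <;> subst hj
    · show A x 0 0 = 0; linarith [hsk 0 0]
    · show A x 0 1 = -(A x 1 0); exact hsk 1 0
    · rfl
    · rfl
    · show A x 1 1 = 0; linarith [hsk 1 1]
    · show A x 1 2 = -(A x 2 1); exact hsk 2 1
    · show A x 2 0 = -(A x 0 2); exact hsk 0 2
    · rfl
    · show A x 2 2 = 0; linarith [hsk 2 2]
  have hdiffA : ∀ x ∈ Ω, DifferentiableAt ℝ A x := fun x hx =>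
    (hA.differentiableOn one_ne_zero).differentiableAt (hΩo.mem_nhds hx)
  have ha : ∀ x ∈ Ω, DifferentiableAt ℝ a x := by
    intro x hx
    refine differentiableAt_pi.2 fun i => ?_
    rcases hfin i with hi|hi|hi <;> subst hi
    · exact ((entryCLM 2 1).differentiableAt).comp x (hdiffA x hx)
    · exact ((entryCLM 0 2).differentiableAt).comp x (hdiffA x hx)
    · exact ((entryCLM 1 0).differentiableAt).comp x (hdiffA x hx)
  have hev : ∀ x ∈ Ω, ∀ᶠ y in nhds x, A y = Anti3 (a y) := by
    intro x hx
    filter_upwards [hΩo.mem_nhds hx] with y hy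
    exact hAa y hy
  constructor
  · intro hsym
    have hskp : ∀ x ∈ Ω, ∀ h k : V3,
        (∑ i, fderiv ℝ a x h i * k i) + (∑ i, fderiv ℝ a x k i * h i) = 0 := fun x hx =>
      pairing_of_basis' _ (skew_pairing_of_sym' A a x (ha x hx) (hev x hx) (hsym x hx))
    obtain ⟨x₀, hx₀⟩ := hΩc.nonempty
    have hloc : ∀ x ∈ Ω, ∃ ε > 0, Metric.ball x ε ⊆ Ω ∧
        ∀ y ∈ Metric.ball x ε, fderiv ℝ a y = fderiv ℝ a x := by
      intro x hx
      obtain ⟨ε, hε, hb⟩ := Metric.isOpen_iff.1 hΩo x hx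
      exact ⟨ε, hε, hb,
        ball_W_const' a x ε (fun z hz => ha z (hb hz)) (fun z hz => hskp z (hb hz))⟩
    have hW := locally_const_eq' Ω hΩc.isPreconnected _ hloc hx₀
    set L := fderiv ℝ a x₀ with hLdef
    set φ : V3 → V3 := fun x => a x - L x with hφdef
    have hφloc : ∀ x ∈ Ω, ∃ ε > 0, Metric.ball x ε ⊆ Ω ∧
        ∀ y ∈ Metric.ball x ε, φ y = φ x := by
      intro x hx
      obtain ⟨ε, hε, hb⟩ := Metric.isOpen_iff.1 hΩo x hx
      refine ⟨ε, hε, hb, fun y hy => ?_⟩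
      refine (convex_ball x ε).is_const_of_fderivWithin_eq_zero
        (fun z hz => ((ha z (hb hz)).sub L.differentiableAt).differentiableWithinAt)
        ?_ hy (Metric.mem_ball_self hε)
      intro z hz
      rw [fderivWithin_of_isOpen Metric.isOpen_ball hz]
      have hfz : fderiv ℝ φ z = fderiv ℝ a z - L := by
        rw [hφdef]
        rw [fderiv_fun_sub (ha z (hb hz)) L.differentiableAt, L.fderiv]
      rw [hfz, hW z (hb hz)]
      simp
    have hφ0 := locally_const_eq' Ω hΩc.isPreconnected φ hφloc hx₀
    refine ⟨Matrix.of fun i j => L (Pi.single j 1) i, φ x₀, ?_, ?_⟩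
    · have hbb := skew_pairing_of_sym' A a x₀ (ha x₀ hx₀) (hev x₀ hx₀) (hsym x₀ hx₀)
      refine Matrix.ext fun i j => ?_
      simp only [Matrix.transpose_apply, Matrix.neg_apply, Matrix.of_apply]
      linarith [hbb i j]
    · intro x hx
      have h1 : φ x = φ x₀ := hφ0 x hx
      have h2 : a x = L x + φ x₀ := by
        rw [← h1]
        show a x = L x + (a x - L x)
        abel
      have hmul : (Matrix.of fun i j => L (Pi.single j 1) i).mulVec x = L x := by
        funext i
        show ∑ j, (Matrix.of fun i j => L (Pi.single j 1) i) i j * x j = L x i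
        rw [apply_eq_sum' L x i]
        exact Finset.sum_congr rfl fun j _ => by simp [Matrix.of_apply, mul_comm]
      rw [hAa x hx, hmul, ← h2]
  · rintro ⟨Atil, b, hsk, hrep⟩ x hx
    refine sym_curl_of_affine' A Atil b x hsk ?_
    filter_upwards [hΩo.mem_nhds hx] with y hy
    exact hrep y hy
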